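/- Let r = 2ℓ, let A ∈ ℂ^{r×r} be Hamiltonian (i.e., (JA)^T = JA) and let B ∈ ℂ^{r×n}. Then: (i) (AJ)^T = AJ; (ii) the pencil λJ − AJ is T-even, i.e., (−λJ − AJ)^T = λJ − AJ for all λ; and (iii) B^T J^T (λI_r − A)^{-1} B = B^T (λJ − AJ)^{-1} B for every λ ∈ ℂ that is not an eigenvalue of A. Consequently, if G(λ) = P(λ) + B^T J^T (λI_r − A)^{-1} B with P(λ) a T-even matrix polynomial, then G(λ) = P(λ) + B^T (λE − A')^{-1} B with E := J and A' := AJ is a realization in which P(λ) and λE − A' are both T-even and E is nonsingular. -/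

import Mathlib

open Polynomial Matrix
open scoped Classical

set_option synthInstance.maxHeartbeats 1000000
set_option maxHeartbeats 1000000

noncomputable section

namespace RatLin

/-- Block index type for `mn × mn` matrices viewed as `m × m` block matrices
with `n × n` blocks. -/
abbrev BI (m n : ℕ) := Fin m × Fin n

/-- Index type for `(mn + r) × (mn + r)` system matrices; `ρ` indexes the state space. -/
abbrev SI (m n : ℕ) (ρ : Type) := BI m n ⊕ ρ

/-! ### Elementary matrices and Fiedler factors -/

/-- The elementary matrix `M_i(X)`, `-m ≤ i ≤ m-1` (identity outside this range). -/
def elemM (m n : ℕ) (Xm : Matrix (Fin n) (Fin n) ℂ) (i : ℤ) :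
    Matrix (BI m n) (BI m n) ℂ :=
  Matrix.of fun p q =>
    (if i = 0 then
      (if p.1 = q.1 then (if (p.1 : ℕ) = m - 1 then Xm else (1 : Matrix (Fin n) (Fin n) ℂ)) else 0)
    else if i = -(m : ℤ) then
      (if p.1 = q.1 then (if (p.1 : ℕ) = 0 then Xm else 1) else 0)
    else if 0 < i ∧ i < (m : ℤ) then
      (if (p.1 : ℕ) = m - 1 - i.toNat ∧ (q.1 : ℕ) = m - 1 - i.toNat then Xm
       else if (p.1 : ℕ) = m - 1 - i.toNat ∧ (q.1 : ℕ) = m - i.toNat then 1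
       else if (p.1 : ℕ) = m - i.toNat ∧ (q.1 : ℕ) = m - 1 - i.toNat then 1
       else if (p.1 : ℕ) = m - i.toNat ∧ (q.1 : ℕ) = m - i.toNat then 0
       else if p.1 = q.1 then 1 else 0)
    else if -(m : ℤ) < i ∧ i < 0 then
      (if (p.1 : ℕ) = m - 1 - (-i).toNat ∧ (q.1 : ℕ) = m - 1 - (-i).toNat then 0
       else if (p.1 : ℕ) = m - 1 - (-i).toNat ∧ (q.1 : ℕ) = m - (-i).toNat then 1
       else if (p.1 : ℕ) = m - (-i).toNat ∧ (q.1 : ℕ) = m - 1 - (-i).toNat then 1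
       else if (p.1 : ℕ) = m - (-i).toNat ∧ (q.1 : ℕ) = m - (-i).toNat then Xm
       else if p.1 = q.1 then 1 else 0)
    else (if p.1 = q.1 then 1 else 0)) p.2 q.2

/-- The Fiedler matrix `M_i^P` of the matrix polynomial with coefficients `Ac`. -/
def MP (m n : ℕ) (Ac : ℕ → Matrix (Fin n) (Fin n) ℂ) (i : ℤ) :
    Matrix (BI m n) (BI m n) ℂ :=
  if 0 ≤ i then elemM m n (-(Ac i.toNat)) i else elemM m n (Ac (-i).toNat) i

/-- `M_t(Z)`: product of elementary matrices along an index tuple with a matrix assignment. -/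
def elemProd (m n : ℕ) (t : List ℤ) (Z : List (Matrix (Fin n) (Fin n) ℂ)) :
    Matrix (BI m n) (BI m n) ℂ :=
  ((t.zip Z).map fun s => elemM m n s.2 s.1).prod

/-- `M^P_t`: product of Fiedler matrices along an index tuple. -/
def MPprod (m n : ℕ) (Ac : ℕ → Matrix (Fin n) (Fin n) ℂ) (t : List ℤ) :
    Matrix (BI m n) (BI m n) ℂ :=
  (t.map (MP m n Ac)).prod

/-- `e_j ⊗ C` (`j` is a 1-based block index). -/
def eColM (m n : ℕ) {ρ : Type} (j : ℕ) (Cm : Matrix (Fin n) ρ ℂ) : Matrix (BI m n) ρ ℂ :=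
  Matrix.of fun p k => if (p.1 : ℕ) = j - 1 then Cm p.2 k else 0

/-- `e_j^T ⊗ B` (`j` is a 1-based block index). -/
def eRowM (m n : ℕ) {ρ : Type} (j : ℕ) (Bm : Matrix ρ (Fin n) ℂ) : Matrix ρ (BI m n) ℂ :=
  Matrix.of fun k q => if (q.1 : ℕ) = j - 1 then Bm k q.2 else 0

/-- `𝕄_i(X) = diag(M_i(X), I_r)`. -/
def sysElem (m n : ℕ) (ρ : Type) [DecidableEq ρ] [Fintype ρ]
    (Xm : Matrix (Fin n) (Fin n) ℂ) (i : ℤ) : Matrix (SI m n ρ) (SI m n ρ) ℂ :=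
  fromBlocks (elemM m n Xm i) 0 0 1

/-- `𝕄_t(Z)`. -/
def sysElemProd (m n : ℕ) (ρ : Type) [DecidableEq ρ] [Fintype ρ]
    (t : List ℤ) (Z : List (Matrix (Fin n) (Fin n) ℂ)) : Matrix (SI m n ρ) (SI m n ρ) ℂ :=
  ((t.zip Z).map fun s => sysElem m n ρ s.2 s.1).prod

/-- `𝕄^P_i = diag(M^P_i, I_r)`. -/
def sysMP (m n : ℕ) (ρ : Type) [DecidableEq ρ] [Fintype ρ]
    (Ac : ℕ → Matrix (Fin n) (Fin n) ℂ) (i : ℤ) : Matrix (SI m n ρ) (SI m n ρ) ℂ :=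
  fromBlocks (MP m n Ac i) 0 0 1

/-- `𝕄^P_t`. -/
def sysMPprod (m n : ℕ) (ρ : Type) [DecidableEq ρ] [Fintype ρ]
    (Ac : ℕ → Matrix (Fin n) (Fin n) ℂ) (t : List ℤ) : Matrix (SI m n ρ) (SI m n ρ) ℂ :=
  (t.map (sysMP m n ρ Ac)).prod

/-- The Fiedler matrices `𝕄^S_i` of the system matrix
`S(λ) = [[P(λ), C], [B, A - λE]]`. -/
def MS (m n : ℕ) (ρ : Type) [DecidableEq ρ] [Fintype ρ]
    (Ac : ℕ → Matrix (Fin n) (Fin n) ℂ) (Em Am : Matrix ρ ρ ℂ)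
    (Cm : Matrix (Fin n) ρ ℂ) (Bm : Matrix ρ (Fin n) ℂ) (i : ℤ) :
    Matrix (SI m n ρ) (SI m n ρ) ℂ :=
  if i = 0 then fromBlocks (MP m n Ac 0) (-(eColM m n m Cm)) (-(eRowM m n m Bm)) (-Am)
  else if i = -(m : ℤ) then fromBlocks (MP m n Ac i) 0 0 (-Em)
  else fromBlocks (MP m n Ac i) 0 0 1

/-- `𝕄^S_t`. -/
def MSprod (m n : ℕ) (ρ : Type) [DecidableEq ρ] [Fintype ρ]
    (Ac : ℕ → Matrix (Fin n) (Fin n) ℂ) (Em Am : Matrix ρ ρ ℂ)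
    (Cm : Matrix (Fin n) ρ ℂ) (Bm : Matrix ρ (Fin n) ℂ) (t : List ℤ) :
    Matrix (SI m n ρ) (SI m n ρ) ℂ :=
  (t.map (MS m n ρ Ac Em Am Cm Bm)).prod


/-! ### Index-tuple combinatorics -/

/-- The string of integers `(a : b) = (a, a+1, …, b)` (empty if `a > b`). -/
def seg (a b : ℕ) : List ℤ :=
  (List.range (b + 1 - a)).map fun j => ((a + j : ℕ) : ℤ)

/-- The chain `(t, t+1, …, t+p)`. -/
def consecChain (t : ℤ) (p : ℕ) : List ℤ := (List.range (p + 1)).map fun j => t + (j : ℤ)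

/-- The chain `(t+p, …, t+1, t)`. -/
def invChain (t : ℤ) (p : ℕ) : List ℤ := (List.range (p + 1)).map fun j => t + ((p - j : ℕ) : ℤ)

/-- The number `c_t(α)` of consecutive consecutions of `α` at `t` (` = -1` if `t ∉ α`). -/
def cNum (α : List ℤ) (t : ℤ) : ℤ :=
  if t ∈ α then (Nat.findGreatest (fun p => List.Sublist (consecChain t p) α) α.length : ℤ) else -1

/-- The number `i_t(α)` of consecutive inversions of `α` at `t` (` = -1` if `t ∉ α`). -/
def iNum (α : List ℤ) (t : ℤ) : ℤ :=
  if t ∈ α then (Nat.findGreatest (fun p => List.Sublist (invChain t p) α) α.length : ℤ) else -1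

/-- The successor infix property: between any two equal entries there is an
occurrence of the successor index.  (This formulation is invariant under shifts,
so it covers tuples with negative entries as well.) -/
def SIP (α : List ℤ) : Prop :=
  ∀ a b : Fin α.length, a < b → α.get a = α.get b →
    ∃ c : Fin α.length, a < c ∧ c < b ∧ α.get c = α.get a + 1

/-- `α` is (an index tuple that is) a permutation of `{lo, lo+1, …, lo+len-1}`. -/
def PermOn (α : List ℤ) (lo : ℤ) (len : ℕ) : Prop :=
  α.Perm ((List.range len).map fun j => lo + (j : ℤ))

/-- Validity of the data `(h, σ, τ, σ₁, σ₂, τ₁, τ₂)` defining a GFPR for degree `m`. -/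
def ValidGFPR (m h : ℕ) (σ τ σ1 σ2 τ1 τ2 : List ℤ) : Prop :=
  h + 1 ≤ m ∧
  PermOn σ 0 (h + 1) ∧ PermOn τ (-(m : ℤ)) (m - h) ∧
  (∀ x ∈ σ1, 0 ≤ x ∧ x < (h : ℤ)) ∧ (∀ x ∈ σ2, 0 ≤ x ∧ x < (h : ℤ)) ∧
  SIP (σ1 ++ σ ++ σ2) ∧
  (∀ x ∈ τ1, -(m : ℤ) ≤ x ∧ x ≤ -(h : ℤ) - 2) ∧
  (∀ x ∈ τ2, -(m : ℤ) ≤ x ∧ x ≤ -(h : ℤ) - 2) ∧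
  SIP (τ1 ++ τ ++ τ2)

/-- `Z` is a matrix assignment for the index tuple `t`. -/
def AssignLen {n : ℕ} (t : List ℤ) (Z : List (Matrix (Fin n) (Fin n) ℂ)) : Prop :=
  Z.length = t.length

/-- `Z` is a nonsingular matrix assignment for `t` (relative to degree `m`): every matrix
assigned to a position occupied by the index `0` or `-m` is nonsingular. -/
def NonsingAssign (m : ℕ) {n : ℕ} (t : List ℤ) (Z : List (Matrix (Fin n) (Fin n) ℂ)) : Prop :=
  Z.length = t.length ∧ ∀ s ∈ t.zip Z, (s.1 = 0 ∨ s.1 = -(m : ℤ)) → IsUnit s.2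

/-- A matrix assignment consisting of symmetric matrices. -/
def SymmAssign {n : ℕ} (Z : List (Matrix (Fin n) (Fin n) ℂ)) : Prop :=
  ∀ M ∈ Z, Mᵀ = M

/-- Shift every entry of an index tuple by `k`. -/
def shiftZ (t : List ℤ) (k : ℤ) : List ℤ := t.map (· + k)

/-- The admissible tuple `(h-1:h, h-3:h-2, …, p+1:p+2, 0:p)` of `{0,…,h}` with index `p`. -/
def admTuple (h p : ℕ) : List ℤ :=
  ((List.range ((h - p) / 2)).flatMap fun j => seg (h - 1 - 2 * j) (h - 2 * j)) ++ seg 0 p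

/-- `(0:p)_{rev_c} = (0:p-1, 0:p-2, …, 0:1, 0)`. -/
def revC (p : ℕ) : List ℤ := (List.range p).flatMap fun j => seg 0 (p - 1 - j)

/-- The symmetric complement of the admissible tuple of `{0,…,h}` with index `p`. -/
def symComp (h p : ℕ) : List ℤ :=
  ((List.range ((h - p) / 2)).map fun j => ((h - 1 - 2 * j : ℕ) : ℤ)) ++
    (if 1 ≤ p then revC p else [])

/-- The simple admissible tuple of `{0,…,h}` (index `0` for even `h`, `1` for odd `h`). -/
def simpleAdm (h : ℕ) : List ℤ := admTuple h (h % 2)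

/-- The symmetric complement of the simple admissible tuple of `{0,…,h}`. -/
def simpleSymComp (h : ℕ) : List ℤ := symComp h (h % 2)

/-- The tuple `(a_1 : h-2, a_2 : h-4, …, a_{⌊h/2⌋} : h - 2⌊h/2⌋)` in canonical form for `h`. -/
def canonForm (h : ℕ) (a : ℕ → ℕ) : List ℤ :=
  (List.range (h / 2)).flatMap fun j => seg (a (j + 1)) (h - 2 * (j + 1))

/-- `t` is an index tuple in canonical form for `h`. -/
def IsCanonicalForm (h : ℕ) (t : List ℤ) : Prop := ∃ a : ℕ → ℕ, t = canonForm h a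
/-! ### Matrix polynomials, rational matrices and Rosenbrock strong linearizations -/

/-- Embed a complex matrix as a constant matrix polynomial. -/
def cmat {ι κ : Type} (M : Matrix ι κ ℂ) : Matrix ι κ ℂ[X] := M.map Polynomial.C

/-- Embed a complex matrix as a constant rational matrix. -/
def rmat {ι κ : Type} (M : Matrix ι κ ℂ) : Matrix ι κ (RatFunc ℂ) :=
  M.map (algebraMap ℂ (RatFunc ℂ))

/-- Embed a matrix polynomial as a rational matrix. -/
def pmat {ι κ : Type} (M : Matrix ι κ ℂ[X]) : Matrix ι κ (RatFunc ℂ) :=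
  M.map (algebraMap ℂ[X] (RatFunc ℂ))

/-- Evaluation of a matrix polynomial at a point. -/
def evalM {ι κ : Type} (lam : ℂ) (M : Matrix ι κ ℂ[X]) : Matrix ι κ ℂ :=
  M.map (Polynomial.eval lam)

/-- `P(λ) = Σ_{i=0}^m λ^i A_i` as a matrix polynomial. -/
def polyPartC (m n : ℕ) (Ac : ℕ → Matrix (Fin n) (Fin n) ℂ) : Matrix (Fin n) (Fin n) ℂ[X] :=
  ∑ i ∈ Finset.range (m + 1), (X : ℂ[X]) ^ i • cmat (Ac i)

/-- `P(λ)` as a rational matrix. -/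
def polyPartR (m n : ℕ) (Ac : ℕ → Matrix (Fin n) (Fin n) ℂ) :
    Matrix (Fin n) (Fin n) (RatFunc ℂ) :=
  ∑ i ∈ Finset.range (m + 1), (RatFunc.X : RatFunc ℂ) ^ i • rmat (Ac i)

/-- The rational matrix `G(λ) = P(λ) + C (λE - A)⁻¹ B`. -/
def Gtransfer (m n : ℕ) (ρ : Type) [Fintype ρ] [DecidableEq ρ]
    (Ac : ℕ → Matrix (Fin n) (Fin n) ℂ) (Em Am : Matrix ρ ρ ℂ)
    (Cm : Matrix (Fin n) ρ ℂ) (Bm : Matrix ρ (Fin n) ℂ) :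
    Matrix (Fin n) (Fin n) (RatFunc ℂ) :=
  polyPartR m n Ac + rmat Cm * ((RatFunc.X : RatFunc ℂ) • rmat Em - rmat Am)⁻¹ * rmat Bm

/-- Pointwise evaluation of `G(λ) = P(λ) + C (λE - A)⁻¹ B`. -/
def Gpt (m n : ℕ) {ρ : Type} [Fintype ρ] [DecidableEq ρ]
    (Ac : ℕ → Matrix (Fin n) (Fin n) ℂ) (Em Am : Matrix ρ ρ ℂ)
    (Cm : Matrix (Fin n) ρ ℂ) (Bm : Matrix ρ (Fin n) ℂ) (lam : ℂ) :
    Matrix (Fin n) (Fin n) ℂ :=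
  (∑ i ∈ Finset.range (m + 1), lam ^ i • Ac i) + Cm * (lam • Em - Am)⁻¹ * Bm

/-- A scalar rational function is proper if its numerator degree does not
exceed its denominator degree. -/
def Proper (f : RatFunc ℂ) : Prop := f.num.degree ≤ f.denom.degree

/-- The value of a proper rational function at infinity. -/
def atInf (f : RatFunc ℂ) : ℂ :=
  if f.num.degree = f.denom.degree then f.num.leadingCoeff / f.denom.leadingCoeff else 0

/-- A biproper rational matrix: proper with nonsingular value at infinity. -/
def Biproper {ι : Type} [Fintype ι] [DecidableEq ι] (O : Matrix ι ι (RatFunc ℂ)) : Prop :=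
  (∀ i j, Proper (O i j)) ∧ IsUnit (Matrix.of fun i j => atInf (O i j))

/-- `diag(I_{(m-1)n}, W)` with `W` occupying the last diagonal block (polynomial entries). -/
def diagLastP (m n : ℕ) (W : Matrix (Fin n) (Fin n) ℂ[X]) : Matrix (BI m n) (BI m n) ℂ[X] :=
  Matrix.of fun p q =>
    if (p.1 : ℕ) = m - 1 ∧ (q.1 : ℕ) = m - 1 then W p.2 q.2
    else if p = q then 1 else 0

/-- `diag(I_{(m-1)n}, W)` with `W` occupying the last diagonal block (rational entries). -/
def diagLastR (m n : ℕ) (W : Matrix (Fin n) (Fin n) (RatFunc ℂ)) :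
    Matrix (BI m n) (BI m n) (RatFunc ℂ) :=
  Matrix.of fun p q =>
    if (p.1 : ℕ) = m - 1 ∧ (q.1 : ℕ) = m - 1 then W p.2 q.2
    else if p = q then 1 else 0

/-- The system matrix `S(λ) = [[P(λ), C], [B, A - λE]]` (size `(n+r) × (n+r)`). -/
def sysS (m n : ℕ) (ρ : Type) (Ac : ℕ → Matrix (Fin n) (Fin n) ℂ)
    (Em Am : Matrix ρ ρ ℂ) (Cm : Matrix (Fin n) ρ ℂ) (Bm : Matrix ρ (Fin n) ℂ) :
    Matrix (Fin n ⊕ ρ) (Fin n ⊕ ρ) ℂ[X] :=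
  fromBlocks (polyPartC m n Ac) (cmat Cm) (cmat Bm) (cmat Am - (X : ℂ[X]) • cmat Em)

/-- `diag(I_{(m-1)n}, S(λ))` with `S(λ)` occupying the trailing `(n+r) × (n+r)` corner. -/
def sysDiagIS (m n : ℕ) (ρ : Type) (Ac : ℕ → Matrix (Fin n) (Fin n) ℂ)
    (Em Am : Matrix ρ ρ ℂ) (Cm : Matrix (Fin n) ρ ℂ) (Bm : Matrix ρ (Fin n) ℂ) :
    Matrix (SI m n ρ) (SI m n ρ) ℂ[X] :=
  fromBlocks (diagLastP m n (polyPartC m n Ac))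
    (Matrix.of fun p k => if (p.1 : ℕ) = m - 1 then Polynomial.C (Cm p.2 k) else 0)
    (Matrix.of fun k q => if (q.1 : ℕ) = m - 1 then Polynomial.C (Bm k q.2) else 0)
    (cmat Am - (X : ℂ[X]) • cmat Em)

/-- Minimality (equivalently, irreducibility) of the realization
`G(λ) = P(λ) + C (λE - A)⁻¹ B`. -/
def MinimalReal (n : ℕ) (ρ : Type) [Fintype ρ] [DecidableEq ρ]
    (Em Am : Matrix ρ ρ ℂ) (Cm : Matrix (Fin n) ρ ℂ) (Bm : Matrix ρ (Fin n) ℂ) : Prop :=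
  ∀ lam : ℂ, (Matrix.fromCols Bm (Am - lam • Em)).rank = Fintype.card ρ ∧
    (Matrix.fromRows Cm (Am - lam • Em)).rank = Fintype.card ρ

/-- `L` is a Rosenbrock strong linearization of
`G(λ) = P(λ) + C (λE - A)⁻¹ B` (Definition 2.4 of the paper). -/
def IsRosenbrock (m n : ℕ) (ρ : Type) [Fintype ρ] [DecidableEq ρ]
    (Ac : ℕ → Matrix (Fin n) (Fin n) ℂ) (Em Am : Matrix ρ ρ ℂ)
    (Cm : Matrix (Fin n) ρ ℂ) (Bm : Matrix ρ (Fin n) ℂ)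
    (L : Matrix (SI m n ρ) (SI m n ρ) ℂ[X]) : Prop :=
  ∃ (Xc Yc : Matrix (BI m n) (BI m n) ℂ) (Cc : Matrix (BI m n) ρ ℂ)
    (Bc : Matrix ρ (BI m n) ℂ) (H K : Matrix ρ ρ ℂ),
    -- `L(λ) = [[𝒳 - λ𝒴, 𝒞], [ℬ, H - λK]]` with `K` nonsingular
    IsUnit K ∧
    L = fromBlocks (cmat Xc - (X : ℂ[X]) • cmat Yc) (cmat Cc) (cmat Bc)
          (cmat H - (X : ℂ[X]) • cmat K) ∧
    -- `L` is an irreducible system matrix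
    (∀ lam : ℂ, (Matrix.fromCols Bc (H - lam • K)).rank = Fintype.card ρ ∧
      (Matrix.fromRows Cc (H - lam • K)).rank = Fintype.card ρ) ∧
    -- condition (a): unimodular equivalence to `diag(I_{(m-1)n}, S(λ))`
    (∃ (U V : Matrix (BI m n) (BI m n) ℂ[X]) (U0 V0 : Matrix ρ ρ ℂ),
      IsUnit U.det ∧ IsUnit V.det ∧ IsUnit U0 ∧ IsUnit V0 ∧
      fromBlocks U 0 0 (cmat U0) * L * fromBlocks V 0 0 (cmat V0) =
        sysDiagIS m n ρ Ac Em Am Cm Bm) ∧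
    -- condition (b): biproper equivalence of `λ⁻¹𝔾(λ)` to `diag(I_{(m-1)n}, λ^{-m}G(λ))`
    (∃ Ol Or : Matrix (BI m n) (BI m n) (RatFunc ℂ),
      Biproper Ol ∧ Biproper Or ∧
      Ol * ((RatFunc.X : RatFunc ℂ)⁻¹ •
          (rmat Xc - (RatFunc.X : RatFunc ℂ) • rmat Yc +
            rmat Cc * ((RatFunc.X : RatFunc ℂ) • rmat K - rmat H)⁻¹ * rmat Bc)) * Or =
        diagLastR m n (((RatFunc.X : RatFunc ℂ) ^ m)⁻¹ • Gtransfer m n ρ Ac Em Am Cm Bm))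
/-! ### GFPR pencils -/

/-- The GFPR `L(λ) = M_{(τ₁,σ₁)}(Y₁,X₁) (λ M^P_τ - M^P_σ) M_{(σ₂,τ₂)}(X₂,Y₂)` of `P(λ)`. -/
def gfprP (m n : ℕ) (Ac : ℕ → Matrix (Fin n) (Fin n) ℂ)
    (σ τ σ1 σ2 τ1 τ2 : List ℤ) (X1 X2 Y1 Y2 : List (Matrix (Fin n) (Fin n) ℂ)) :
    Matrix (BI m n) (BI m n) ℂ[X] :=
  cmat (elemProd m n (τ1 ++ σ1) (Y1 ++ X1)) *
    ((X : ℂ[X]) • cmat (MPprod m n Ac τ) - cmat (MPprod m n Ac σ)) *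
    cmat (elemProd m n (σ2 ++ τ2) (X2 ++ Y2))

/-- The GFPR `𝕃(λ) = 𝕄_{(τ₁,σ₁)}(Y₁,X₁) (λ 𝕄^S_τ - 𝕄^S_σ) 𝕄_{(σ₂,τ₂)}(X₂,Y₂)` of `G(λ)`. -/
def gfprG (m n : ℕ) (ρ : Type) [Fintype ρ] [DecidableEq ρ]
    (Ac : ℕ → Matrix (Fin n) (Fin n) ℂ) (Em Am : Matrix ρ ρ ℂ)
    (Cm : Matrix (Fin n) ρ ℂ) (Bm : Matrix ρ (Fin n) ℂ)
    (σ τ σ1 σ2 τ1 τ2 : List ℤ) (X1 X2 Y1 Y2 : List (Matrix (Fin n) (Fin n) ℂ)) :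
    Matrix (SI m n ρ) (SI m n ρ) ℂ[X] :=
  cmat (sysElemProd m n ρ (τ1 ++ σ1) (Y1 ++ X1)) *
    ((X : ℂ[X]) • cmat (MSprod m n ρ Ac Em Am Cm Bm τ) - cmat (MSprod m n ρ Ac Em Am Cm Bm σ)) *
    cmat (sysElemProd m n ρ (σ2 ++ τ2) (X2 ++ Y2))

/-- `L` belongs to the family of GFPRs of `P(λ)`. -/
def IsGFPRofP (m n : ℕ) (Ac : ℕ → Matrix (Fin n) (Fin n) ℂ)
    (L : Matrix (BI m n) (BI m n) ℂ[X]) : Prop :=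
  ∃ (h : ℕ) (σ τ σ1 σ2 τ1 τ2 : List ℤ) (X1 X2 Y1 Y2 : List (Matrix (Fin n) (Fin n) ℂ)),
    ValidGFPR m h σ τ σ1 σ2 τ1 τ2 ∧
    AssignLen σ1 X1 ∧ AssignLen σ2 X2 ∧ AssignLen τ1 Y1 ∧ AssignLen τ2 Y2 ∧
    L = gfprP m n Ac σ τ σ1 σ2 τ1 τ2 X1 X2 Y1 Y2

/-- `LL` belongs to the family of GFPRs of `G(λ)`. -/
def IsGFPRofG (m n : ℕ) (ρ : Type) [Fintype ρ] [DecidableEq ρ]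
    (Ac : ℕ → Matrix (Fin n) (Fin n) ℂ) (Em Am : Matrix ρ ρ ℂ)
    (Cm : Matrix (Fin n) ρ ℂ) (Bm : Matrix ρ (Fin n) ℂ)
    (LL : Matrix (SI m n ρ) (SI m n ρ) ℂ[X]) : Prop :=
  ∃ (h : ℕ) (σ τ σ1 σ2 τ1 τ2 : List ℤ) (X1 X2 Y1 Y2 : List (Matrix (Fin n) (Fin n) ℂ)),
    ValidGFPR m h σ τ σ1 σ2 τ1 τ2 ∧
    AssignLen σ1 X1 ∧ AssignLen σ2 X2 ∧ AssignLen τ1 Y1 ∧ AssignLen τ2 Y2 ∧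
    LL = gfprG m n ρ Ac Em Am Cm Bm σ τ σ1 σ2 τ1 τ2 X1 X2 Y1 Y2

/-! ### Structured pencils -/

/-- Pointwise `T`-even: `R(-λ)ᵀ = R(λ)`. -/
def TEvenP {ι : Type} (M : Matrix ι ι ℂ[X]) : Prop :=
  ∀ lam : ℂ, (evalM (-lam) M)ᵀ = evalM lam M

/-- Pointwise `T`-odd: `R(-λ)ᵀ = -R(λ)`. -/
def TOddP {ι : Type} (M : Matrix ι ι ℂ[X]) : Prop :=
  ∀ lam : ℂ, (evalM (-lam) M)ᵀ = -(evalM lam M)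

/-- A quasi-identity matrix `ε₁ I_n ⊕ ⋯ ⊕ ε_m I_n`. -/
def quasiId (m n : ℕ) (ε : Fin m → ℂ) : Matrix (BI m n) (BI m n) ℂ :=
  Matrix.of fun p q => if p = q then ε p.1 else 0

/-- The parameters of a quasi-identity matrix are signs. -/
def IsSign {m : ℕ} (ε : Fin m → ℂ) : Prop := ∀ i, ε i = 1 ∨ ε i = -1

/-- `diag(Q, I_r)` for a quasi-identity matrix `Q`, as a constant matrix polynomial. -/
def sysQuasi (m n : ℕ) (ρ : Type) [DecidableEq ρ] (ε : Fin m → ℂ) :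
    Matrix (SI m n ρ) (SI m n ρ) ℂ[X] :=
  fromBlocks (cmat (quasiId m n ε)) 0 0 1

/-- `J = [[0, I_ℓ], [-I_ℓ, 0]]`. -/
def Jmat (l : ℕ) : Matrix (Fin l ⊕ Fin l) (Fin l ⊕ Fin l) ℂ :=
  fromBlocks 0 1 (-1) 0

/-- `𝕁_{mn,r} = diag(I_{mn}, J)` as a constant matrix polynomial. -/
def sysJ (m n l : ℕ) : Matrix (SI m n (Fin l ⊕ Fin l)) (SI m n (Fin l ⊕ Fin l)) ℂ[X] :=
  fromBlocks 1 0 0 (cmat (Jmat l))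

/-- Block symmetry of a system pencil `[[A, u ⊗ X'], [vᵀ ⊗ Y', Z']]`:
the leading block matrix is block symmetric and `u = v`. -/
def IsBlockSymSys (m n : ℕ) (ρ : Type) (Amat : Matrix (SI m n ρ) (SI m n ρ) ℂ[X]) : Prop :=
  (∀ p q : BI m n, Amat (Sum.inl p) (Sum.inl q) = Amat (Sum.inl (q.1, p.2)) (Sum.inl (p.1, q.2))) ∧
  ∃ (u : Fin m → ℂ[X]) (Xc : Matrix (Fin n) ρ ℂ[X]) (Yc : Matrix ρ (Fin n) ℂ[X]),
    (∀ p k, Amat (Sum.inl p) (Sum.inr k) = u p.1 * Xc p.2 k) ∧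
    (∀ k q, Amat (Sum.inr k) (Sum.inl q) = u q.1 * Yc k q.2)

/-! ### Null space bases -/

/-- The columns of `Z` form a basis of the right null space of `M`. -/
def ColBasisRight {ι κ : Type} [Fintype ι] [Fintype κ] [DecidableEq ι] [DecidableEq κ]
    (M : Matrix ι ι ℂ) (Z : Matrix ι κ ℂ) : Prop :=
  M * Z = 0 ∧ Z.rank = Fintype.card κ ∧
    ∀ v : ι → ℂ, M *ᵥ v = 0 → ∃ c : κ → ℂ, v = Z *ᵥ c

/-- The columns of `Z` form a basis of the left null space of `M`. -/
def ColBasisLeft {ι κ : Type} [Fintype ι] [Fintype κ] [DecidableEq ι] [DecidableEq κ]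
    (M : Matrix ι ι ℂ) (Z : Matrix ι κ ℂ) : Prop :=
  (∀ j : κ, Matrix.vecMul (fun i => Z i j) M = 0) ∧ Z.rank = Fintype.card κ ∧
    ∀ v : ι → ℂ, Matrix.vecMul v M = 0 → ∃ c : κ → ℂ, v = Z *ᵥ c

/-! ### Type-1 right index tuples (via column standard forms) -/

/-- One commutation step: adjacent entries whose absolute difference exceeds `1` commute. -/
def SwapStep (s t : List ℤ) : Prop :=
  ∃ (l1 l2 : List ℤ) (x y : ℤ), 1 < |x - y| ∧
    s = l1 ++ x :: y :: l2 ∧ t = l1 ++ y :: x :: l2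

/-- Equivalence of index tuples generated by commutation of distant indices. -/
def TupleEquiv : List ℤ → List ℤ → Prop := Relation.EqvGen SwapStep

/-- The tuple in column standard form determined by the ascending breakpoint
list `bp = [a₁, …, a_d]`: `(a_{d-1}+1 : a_d, …, a₁+1 : a₂, 0 : a₁)`. -/
def breaksTuple (bp : List ℕ) : List ℤ :=
  (List.range bp.length).reverse.flatMap fun j =>
    seg (if j = 0 then 0 else bp.getD (j - 1) 0 + 1) (bp.getD j 0)

/-- `bp` is a valid breakpoint list for a permutation of `{0, …, k}`. -/
def IsBreaks (k : ℕ) (bp : List ℕ) : Prop :=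
  bp.Chain' (· < ·) ∧ bp.getLast? = some k

/-- `bp` gives the column standard form of the index tuple `α` (a permutation of `{0,…,k}`). -/
def CsfBreaks (k : ℕ) (α : List ℤ) (bp : List ℕ) : Prop :=
  IsBreaks k bp ∧ TupleEquiv α (breaksTuple bp)

/-- `s` is a right index of type-1 relative to the csf with breakpoints `bp`. -/
def IsRT1 (bp : List ℕ) (s : ℕ) : Prop :=
  (s = 0 ∧ 0 ∉ bp) ∨ (s ≠ 0 ∧ (s - 1) ∈ bp ∧ s ∉ bp)

/-- Breakpoints of the simple tuple `z_r(α, s)` associated with `(α, s)`. -/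
def zrNext (bp : List ℕ) (s : ℕ) : List ℕ :=
  if s = 0 then 0 :: bp else bp.map fun a => if a = s - 1 then s else a

/-- Iterated validity of a tuple of right indices of type-1. -/
def RT1Chain : List ℕ → List ℕ → Prop
  | _, [] => True
  | bp, s :: rest => IsRT1 bp s ∧ RT1Chain (zrNext bp s) rest

/-- `t` is a right index tuple of type-1 relative to the permutation `α` of `{0, …, k}`. -/
def IsRightT1Tuple (k : ℕ) (α : List ℤ) (t : List ℤ) : Prop :=
  ∃ (bp : List ℕ) (tn : List ℕ), CsfBreaks k α bp ∧
    t = tn.map (fun j => (j : ℤ)) ∧ RT1Chain bp tn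
/-! ### STATEMENT 13: from a Hamiltonian realization to a `T`-even realization. -/

theorem hamiltonian_to_Teven_realization
    (l n : ℕ)
    (A : Matrix (Fin l ⊕ Fin l) (Fin l ⊕ Fin l) ℂ)
    (B : Matrix (Fin l ⊕ Fin l) (Fin n) ℂ)
    -- `A` is Hamiltonian: `(JA)ᵀ = JA`
    (hA : (Jmat l * A)ᵀ = Jmat l * A) :
    -- (i) `(AJ)ᵀ = AJ`
    (A * Jmat l)ᵀ = A * Jmat l ∧
    -- (ii) the pencil `λJ - AJ` is `T`-even: `(-λJ - AJ)ᵀ = λJ - AJ`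
    (∀ lam : ℂ, ((-lam) • Jmat l - A * Jmat l)ᵀ = lam • Jmat l - A * Jmat l) ∧
    -- (iii) equality of the strictly proper parts away from the eigenvalues of `A`
    (∀ lam : ℂ, (lam • (1 : Matrix (Fin l ⊕ Fin l) (Fin l ⊕ Fin l) ℂ) - A).det ≠ 0 →
      Bᵀ * (Jmat l)ᵀ * (lam • (1 : Matrix (Fin l ⊕ Fin l) (Fin l ⊕ Fin l) ℂ) - A)⁻¹ * B =
        Bᵀ * (lam • Jmat l - A * Jmat l)⁻¹ * B) ∧
    -- consequently: `E := J` is nonsingular, `λE - A'` with `A' := AJ` is `T`-even, and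
    -- for `T`-even `P(λ)` the two realizations define the same rational matrix `G(λ)`
    IsUnit (Jmat l) ∧
    (∀ (mdeg : ℕ) (Ac : ℕ → Matrix (Fin n) (Fin n) ℂ),
      TEvenP (polyPartC mdeg n Ac) →
      ∀ lam : ℂ, (lam • (1 : Matrix (Fin l ⊕ Fin l) (Fin l ⊕ Fin l) ℂ) - A).det ≠ 0 →
        Gpt mdeg n Ac 1 A (Bᵀ * (Jmat l)ᵀ) B lam =

          Gpt mdeg n Ac (Jmat l) (A * Jmat l) Bᵀ B lam) := by
  have hJT : (Jmat l)ᵀ = -Jmat l := by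
    simp [Jmat, Matrix.fromBlocks_transpose, Matrix.fromBlocks_neg]
  have hJJ : Jmat l * (Jmat l)ᵀ = 1 := by
    simp [Jmat, Matrix.fromBlocks_transpose, Matrix.fromBlocks_multiply,
      ← Matrix.fromBlocks_one]
  have hJJ' : (Jmat l)ᵀ * Jmat l = 1 := by
    simp [Jmat, Matrix.fromBlocks_transpose, Matrix.fromBlocks_multiply,
      ← Matrix.fromBlocks_one]
  have hUnit : IsUnit (Jmat l) := ⟨⟨Jmat l, (Jmat l)ᵀ, hJJ, hJJ'⟩, rfl⟩
  have hJinv : (Jmat l)⁻¹ = (Jmat l)ᵀ := Matrix.inv_eq_right_inv hJJ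
  have h2 : Jmat l * A = Aᵀ * (Jmat l)ᵀ := hA.symm.trans (Matrix.transpose_mul _ _)
  have key : A * Jmat l = (Jmat l)ᵀ * Aᵀ := by
    calc A * Jmat l = ((Jmat l)ᵀ * Jmat l) * A * Jmat l := by rw [hJJ', one_mul]
      _ = (Jmat l)ᵀ * (Jmat l * A) * Jmat l := by rw [mul_assoc ((Jmat l)ᵀ)]
      _ = (Jmat l)ᵀ * (Aᵀ * (Jmat l)ᵀ) * Jmat l := by rw [h2]
      _ = (Jmat l)ᵀ * Aᵀ * ((Jmat l)ᵀ * Jmat l) := by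
          rw [← mul_assoc, mul_assoc ((Jmat l)ᵀ * Aᵀ)]
      _ = (Jmat l)ᵀ * Aᵀ := by rw [hJJ', mul_one]
  have h1 : (A * Jmat l)ᵀ = A * Jmat l := by
    rw [Matrix.transpose_mul, ← key]
  have hiii : ∀ lam : ℂ,
      (lam • (1 : Matrix (Fin l ⊕ Fin l) (Fin l ⊕ Fin l) ℂ) - A).det ≠ 0 →
      Bᵀ * (Jmat l)ᵀ * (lam • (1 : Matrix (Fin l ⊕ Fin l) (Fin l ⊕ Fin l) ℂ) - A)⁻¹ * B =
        Bᵀ * (lam • Jmat l - A * Jmat l)⁻¹ * B := by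
    intro lam _
    have hfac : lam • Jmat l - A * Jmat l =
        (lam • (1 : Matrix (Fin l ⊕ Fin l) (Fin l ⊕ Fin l) ℂ) - A) * Jmat l := by
      rw [Matrix.sub_mul, Matrix.smul_mul, one_mul]
    rw [hfac, Matrix.mul_inv_rev, hJinv]
    rw [Matrix.mul_assoc Bᵀ]
  refine ⟨h1, ?_, hiii, hUnit, ?_⟩
  · intro lam
    rw [Matrix.transpose_sub, Matrix.transpose_smul, hJT, h1, smul_neg, neg_smul, neg_neg]
  · intro mdeg Ac _ lam hdet
    unfold Gpt
    congr 1
    exact hiii lam hdet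

end RatLin
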